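/- Let h : ℝ^q → ℝ be differentiable with L_h-Lipschitz gradient, H : Im(B) → ℝ^q be M̄-Lipschitz with h(y) ≥ h(H(By)) for all y. Then h(y) ≥ h(H(0)) − M̄‖∇h(H(0))‖·‖By‖ − (L_h M̄²/2)‖By‖², i.e., h is lower bounded by a quadratic function of By. Consequently, for β > L_h M̄², the function y ↦ h(y) + ⟨v, By⟩ + (β/2)‖By‖² is coercive in By for any fixed v. -/

import Mathlib

open scoped RealInnerProductSpace

/-- Descent lemma: if the gradient is `Lh`-Lipschitz then
`|h x - h x0 - ⟪g x0, x - x0⟫| ≤ Lh / 2 * ‖x - x0‖ ^ 2`. -/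
lemma descent_aux {F : Type*}
    [NormedAddCommGroup F] [InnerProductSpace ℝ F] [CompleteSpace F]
    (h : F → ℝ) (g : F → F) (Lh : ℝ)
    (hgrad : ∀ y, HasGradientAt h (g y) y)
    (hlip : ∀ y₁ y₂, ‖g y₁ - g y₂‖ ≤ Lh * ‖y₁ - y₂‖)
    (x0 x : F) : |h x - h x0 - ⟪g x0, x - x0⟫| ≤ Lh / 2 * ‖x - x0‖ ^ 2 := by
  set d := x - x0 with hd
  have gcont : Continuous g := by
    have : LipschitzWith (Real.toNNReal |Lh|) g := by
      apply LipschitzWith.of_dist_le_mul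
      intro y₁ y₂
      rw [dist_eq_norm, dist_eq_norm]
      calc ‖g y₁ - g y₂‖ ≤ Lh * ‖y₁ - y₂‖ := hlip y₁ y₂
        _ ≤ |Lh| * ‖y₁ - y₂‖ :=
            mul_le_mul_of_nonneg_right (le_abs_self _) (norm_nonneg _)
        _ = (Real.toNNReal |Lh| : ℝ) * ‖y₁ - y₂‖ := by
            rw [Real.coe_toNNReal _ (abs_nonneg _)]
    exact this.continuous
  have key : ∀ t : ℝ, HasDerivAt (fun t : ℝ => h (x0 + t • d)) ⟪g (x0 + t • d), d⟫ t := by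
    intro t
    have h1 : HasDerivAt (fun t : ℝ => x0 + t • d) d t := by
      simpa using ((hasDerivAt_id t).smul_const d).const_add x0
    have h2 := (hgrad (x0 + t • d)).hasFDerivAt.comp_hasDerivAt t h1
    simpa [Function.comp_def] using h2
  have contInt : Continuous fun t : ℝ => ⟪g (x0 + t • d), d⟫ := by
    apply Continuous.inner _ continuous_const
    exact gcont.comp (by continuity)
  have hFTC : h (x0 + (1:ℝ) • d) - h (x0 + (0:ℝ) • d)
      = ∫ t in (0:ℝ)..1, ⟪g (x0 + t • d), d⟫ :=
    (intervalIntegral.integral_eq_sub_of_hasDerivAt (fun t _ => key t)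
      (contInt.intervalIntegrable 0 1)).symm
  have hx1 : x0 + (1:ℝ) • d = x := by rw [hd]; module
  have hx0 : x0 + (0:ℝ) • d = x0 := by simp
  rw [hx1, hx0] at hFTC
  have hsplit : h x - h x0 - ⟪g x0, d⟫
      = ∫ t in (0:ℝ)..1, (⟪g (x0 + t • d), d⟫ - ⟪g x0, d⟫) := by
    rw [intervalIntegral.integral_sub (contInt.intervalIntegrable 0 1)
      (intervalIntegrable_const), intervalIntegral.integral_const, ← hFTC]
    simp
  rw [hsplit]
  have hbound : ∀ t ∈ Set.Icc (0:ℝ) 1,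
      |⟪g (x0 + t • d), d⟫ - ⟪g x0, d⟫| ≤ (Lh * ‖d‖ ^ 2) * t := by
    intro t ht
    have h1 : ⟪g (x0 + t • d), d⟫ - ⟪g x0, d⟫ = ⟪g (x0 + t • d) - g x0, d⟫ := by
      rw [inner_sub_left]
    rw [h1]
    calc |⟪g (x0 + t • d) - g x0, d⟫| ≤ ‖g (x0 + t • d) - g x0‖ * ‖d‖ :=
          abs_real_inner_le_norm _ _
      _ ≤ (Lh * ‖x0 + t • d - x0‖) * ‖d‖ :=
          mul_le_mul_of_nonneg_right (hlip _ _) (norm_nonneg _)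
      _ = (Lh * ‖d‖ ^ 2) * t := by
          have : x0 + t • d - x0 = t • d := by abel
          rw [this, norm_smul, Real.norm_eq_abs, abs_of_nonneg ht.1]
          ring
  have habs : |∫ t in (0:ℝ)..1, (⟪g (x0 + t • d), d⟫ - ⟪g x0, d⟫)|
      ≤ ∫ t in (0:ℝ)..1, |⟪g (x0 + t • d), d⟫ - ⟪g x0, d⟫| :=
    intervalIntegral.abs_integral_le_integral_abs (by norm_num)
  have hmono : (∫ t in (0:ℝ)..1, |⟪g (x0 + t • d), d⟫ - ⟪g x0, d⟫|)
      ≤ ∫ t in (0:ℝ)..1, (Lh * ‖d‖ ^ 2) * t := by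
    apply intervalIntegral.integral_mono_on (by norm_num)
    · exact ((contInt.sub continuous_const).abs).intervalIntegrable 0 1
    · exact (Continuous.intervalIntegrable (by continuity) 0 1)
    · exact hbound
  have hval : (∫ t in (0:ℝ)..1, (Lh * ‖d‖ ^ 2) * t) = Lh / 2 * ‖d‖ ^ 2 := by
    rw [intervalIntegral.integral_const_mul, integral_id]
    ring
  exact hval ▸ (habs.trans hmono)

/-- If ∇h is L_h-Lipschitz, H is M̄-Lipschitz and h(y) ≥ h(H(By)), then h is
lower bounded by a quadratic function of By:
h(y) ≥ h(H(0)) − M̄‖∇h(H(0))‖‖By‖ − (L_h M̄²/2)‖By‖²; consequently, for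
β > L_h M̄², the function y ↦ h(y) + ⟨v, By⟩ + (β/2)‖By‖² is coercive in By. -/
theorem stmt15 {F G : Type*}
    [NormedAddCommGroup F] [InnerProductSpace ℝ F] [CompleteSpace F]
    [NormedAddCommGroup G] [InnerProductSpace ℝ G]
    (h : F → ℝ) (g : F → F) (Lh Mbar : ℝ)
    (hgrad : ∀ y, HasGradientAt h (g y) y)
    (hlip : ∀ y₁ y₂, ‖g y₁ - g y₂‖ ≤ Lh * ‖y₁ - y₂‖)
    (B : F →L[ℝ] G) (H : G → F)
    (hH : ∀ u₁ u₂, ‖H u₁ - H u₂‖ ≤ Mbar * ‖u₁ - u₂‖)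
    (hmin : ∀ y, h y ≥ h (H (B y))) :
    (∀ y, h y ≥ h (H 0) - Mbar * ‖g (H 0)‖ * ‖B y‖ - Lh * Mbar ^ 2 / 2 * ‖B y‖ ^ 2)
    ∧ (∀ β : ℝ, Lh * Mbar ^ 2 < β → ∀ v : G, ∀ Cb : ℝ, ∃ R : ℝ, ∀ y,
        R ≤ ‖B y‖ → h y + ⟪v, B y⟫ + β / 2 * ‖B y‖ ^ 2 ≥ Cb) := by
  have hb : ∀ y, h y ≥ h (H 0) - Mbar * ‖g (H 0)‖ * ‖B y‖
      - Lh * Mbar ^ 2 / 2 * ‖B y‖ ^ 2 := by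
    intro y
    by_cases hLh : 0 ≤ Lh
    · have hdes := descent_aux h g Lh hgrad hlip (H 0) (H (B y))
      have hdd : ‖H (B y) - H 0‖ ≤ Mbar * ‖B y‖ := by
        have := hH (B y) 0
        simpa using this
      have hip : |⟪g (H 0), H (B y) - H 0⟫| ≤ ‖g (H 0)‖ * ‖H (B y) - H 0‖ :=
        abs_real_inner_le_norm _ _
      have h1 := hmin y
      have hn1 : (0:ℝ) ≤ ‖H (B y) - H 0‖ := norm_nonneg _
      have hn2 : (0:ℝ) ≤ ‖g (H 0)‖ := norm_nonneg _
      have hn3 : (0:ℝ) ≤ ‖B y‖ := norm_nonneg _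
      rw [abs_le] at hdes hip
      have hsq : ‖H (B y) - H 0‖ ^ 2 ≤ (Mbar * ‖B y‖) ^ 2 := pow_le_pow_left₀ hn1 hdd 2
      have hsq' : Lh / 2 * ‖H (B y) - H 0‖ ^ 2 ≤ Lh / 2 * (Mbar * ‖B y‖) ^ 2 :=
        mul_le_mul_of_nonneg_left hsq (by linarith)
      have hlin : ‖g (H 0)‖ * ‖H (B y) - H 0‖ ≤ ‖g (H 0)‖ * (Mbar * ‖B y‖) :=
        mul_le_mul_of_nonneg_left hdd hn2
      nlinarith [hsq', hlin]
    · push_neg at hLh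
      have hy0 : y = 0 := by
        have h1 := hlip y 0
        have h2 : (0:ℝ) ≤ ‖g y - g 0‖ := norm_nonneg _
        have h3 : ‖y - 0‖ = 0 := by nlinarith [norm_nonneg (y - 0)]
        rw [sub_zero] at h3
        exact norm_eq_zero.mp h3
      subst hy0
      simp only [map_zero, norm_zero, mul_zero, zero_pow, sub_zero]
      simpa using hmin 0
  refine ⟨hb, ?_⟩
  intro β hβ v Cb
  set c := Mbar * ‖g (H 0)‖ + ‖v‖ with hc
  set ε := (β - Lh * Mbar ^ 2) / 2 with hε
  have hεpos : 0 < ε := by rw [hε]; linarith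
  refine ⟨max 1 ((c + |Cb| + |h (H 0)|) / ε + 1), fun y hy => ?_⟩
  set r := ‖B y‖ with hr
  have hr1 : (1:ℝ) ≤ r := le_trans (le_max_left _ _) hy
  have hr2 : (c + |Cb| + |h (H 0)|) / ε + 1 ≤ r := le_trans (le_max_right _ _) hy
  have hεr : c + |Cb| + |h (H 0)| + ε ≤ ε * r := by
    have := mul_le_mul_of_nonneg_left hr2 hεpos.le
    rw [mul_add, mul_div_cancel₀ _ hεpos.ne'] at this
    linarith
  have h1 := hb y
  have h2 : -(‖v‖ * r) ≤ ⟪v, B y⟫ := by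
    have := abs_real_inner_le_norm v (B y)
    rw [abs_le] at this
    exact this.1.trans' (le_of_eq rfl)
  have hrpos : (0:ℝ) ≤ r := norm_nonneg _
  have key : (c + |Cb| + |h (H 0)| + ε) * r ≤ ε * r * r :=
    mul_le_mul_of_nonneg_right hεr hrpos
  have key2 : (|Cb| + |h (H 0)| + ε) * 1 ≤ (|Cb| + |h (H 0)| + ε) * r :=
    mul_le_mul_of_nonneg_left hr1 (by positivity)
  have hCb : Cb ≤ |Cb| := le_abs_self _
  have hh0 : -|h (H 0)| ≤ h (H 0) := neg_abs_le _
  nlinarith [key, key2]
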